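/- If Ū is independent of the pair (X1, X2), and W = X2 w.p. α2 and W = c w.p. 1 - α2 with the Bernoulli switch independent of (X1, X2, Ū), then H(X1, X2 | W) = α2 H(X1 | X2) + (1 - α2) H(X1, X2), and hence I(W; X1, X2) = α2 H(X2). -/
import Mathlib


open scoped Classical
open Real

/-- Probability that random variable `X` takes value `a` under pmf `p` on sample space `Ω`. -/
noncomputable def pr {Ω α : Type} [Fintype Ω] (p : Ω → ℝ) (X : Ω → α) (a : α) : ℝ :=
  ∑ ω, if X ω = a then p ω else 0

/-- Shannon entropy (base 2) of the random variable `X`. -/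
noncomputable def ent {Ω α : Type} [Fintype Ω] [Fintype α] (p : Ω → ℝ) (X : Ω → α) : ℝ :=
  -∑ a, pr p X a * Real.logb 2 (pr p X a)

/-- Conditional entropy `H(X|Y)`. -/
noncomputable def entC {Ω α β : Type} [Fintype Ω] [Fintype α] [Fintype β]
    (p : Ω → ℝ) (X : Ω → α) (Y : Ω → β) : ℝ :=
  ent p (fun ω => (X ω, Y ω)) - ent p Y

/-- Mutual information `I(X;Y)`. -/
noncomputable def mi {Ω α β : Type} [Fintype Ω] [Fintype α] [Fintype β]
    (p : Ω → ℝ) (X : Ω → α) (Y : Ω → β) : ℝ :=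
  ent p X + ent p Y - ent p (fun ω => (X ω, Y ω))

/-- Conditional mutual information `I(X;U|Y)`. -/
noncomputable def miC {Ω α β γ : Type} [Fintype Ω] [Fintype α] [Fintype β] [Fintype γ]
    (p : Ω → ℝ) (X : Ω → α) (U : Ω → β) (Y : Ω → γ) : ℝ :=
  entC p X Y + entC p U Y - entC p (fun ω => (X ω, U ω)) Y

/-- Independence of random variables `X` and `Y` under pmf `p`. -/
def IndepRV {Ω α β : Type} [Fintype Ω] (p : Ω → ℝ) (X : Ω → α) (Y : Ω → β) : Prop :=
  ∀ a b, pr p (fun ω => (X ω, Y ω)) (a, b) = pr p X a * pr p Y b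

section helpers
variable {Ω α β : Type} [Fintype Ω]

lemma pr_nonneg (p : Ω → ℝ) (hp0 : ∀ ω, 0 ≤ p ω) (X : Ω → α) (a : α) : 0 ≤ pr p X a :=
  Finset.sum_nonneg fun ω _ => by split <;> simp [hp0 ω]

lemma pr_congr (p : Ω → ℝ) {X : Ω → α} {Y : Ω → β} {a : α} {b : β}
    (h : ∀ ω, X ω = a ↔ Y ω = b) : pr p X a = pr p Y b := by
  unfold pr; exact Finset.sum_congr rfl fun ω _ => by simp [h ω]

lemma pr_eq_zero (p : Ω → ℝ) {X : Ω → α} {a : α} (h : ∀ ω, X ω ≠ a) :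
    pr p X a = 0 := by
  unfold pr; simp [h]

lemma pr_fst [Fintype β] (p : Ω → ℝ) (X : Ω → α) (Y : Ω → β) (a : α) :
    pr p X a = ∑ b, pr p (fun ω => (X ω, Y ω)) (a, b) := by
  unfold pr
  rw [Finset.sum_comm]
  refine Finset.sum_congr rfl fun ω _ => ?_
  by_cases h : X ω = a <;> simp [Prod.ext_iff, h]

lemma pr_snd [Fintype α] (p : Ω → ℝ) (X : Ω → α) (Y : Ω → β) (b : β) :
    pr p Y b = ∑ a, pr p (fun ω => (X ω, Y ω)) (a, b) := by
  unfold pr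
  rw [Finset.sum_comm]
  refine Finset.sum_congr rfl fun ω _ => ?_
  by_cases h : Y ω = b <;> simp [Prod.ext_iff, h]

lemma pr_total [Fintype α] (p : Ω → ℝ) (hp1 : ∑ ω, p ω = 1) (X : Ω → α) :
    ∑ a, pr p X a = 1 := by
  unfold pr
  rw [Finset.sum_comm]
  simpa using hp1

lemma mul_logb_mul {x y : ℝ} (hx : 0 ≤ x) (hy : 0 ≤ y) :
    (x * y) * Real.logb 2 (x * y)
      = y * (x * Real.logb 2 x) + x * (y * Real.logb 2 y) := by
  rcases eq_or_lt_of_le hx with h | h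
  · simp [← h]
  rcases eq_or_lt_of_le hy with h' | h'
  · simp [← h']
  rw [Real.logb_mul h.ne' h'.ne']; ring

lemma ent_swap [Fintype α] [Fintype β] (p : Ω → ℝ) (X : Ω → α) (Y : Ω → β) :
    ent p (fun ω => (X ω, Y ω)) = ent p (fun ω => (Y ω, X ω)) := by
  unfold ent
  rw [Fintype.sum_prod_type, Fintype.sum_prod_type]
  rw [Finset.sum_comm]
  congr 1
  refine Finset.sum_congr rfl fun b _ => Finset.sum_congr rfl fun a _ => ?_
  have h : pr p (fun ω => (X ω, Y ω)) (a, b) = pr p (fun ω => (Y ω, X ω)) (b, a) :=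
    pr_congr p fun ω => by simp [Prod.ext_iff, and_comm]
  rw [h]

end helpers

/-- If Ū is independent of (X1,X2) and W = X2 w.p. α2, W = c (modelled by `none`) w.p. 1-α2 with
the Bernoulli switch independent of (X1,X2,Ū), then H(X1,X2|W) = α2 H(X1|X2) + (1-α2) H(X1,X2),
and hence I(W;X1,X2) = α2 H(X2). -/
theorem randomized_response_cond_ent {Ω α β γ : Type}
    [Fintype Ω] [Fintype α] [Fintype β] [Fintype γ]
    (p : Ω → ℝ) (hp0 : ∀ ω, 0 ≤ p ω) (hp1 : ∑ ω, p ω = 1)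
    (X1 : Ω → α) (X2 : Ω → β) (U : Ω → γ) (S : Ω → Bool) (α2 : ℝ)
    (hα0 : 0 ≤ α2) (hα1 : α2 ≤ 1) (hS : pr p S true = α2)
    (hUind : IndepRV p U (fun ω => (X1 ω, X2 ω)))
    (hSind : IndepRV p S (fun ω => (X1 ω, X2 ω, U ω))) :
    entC p (fun ω => (X1 ω, X2 ω))
        (fun ω => (if S ω then some (X2 ω) else none : Option β)) =
      α2 * entC p X1 X2 + (1 - α2) * ent p (fun ω => (X1 ω, X2 ω)) ∧
    mi p (fun ω => (if S ω then some (X2 ω) else none : Option β))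
        (fun ω => (X1 ω, X2 ω)) = α2 * ent p X2 := by
  set W : Ω → Option β := fun ω => if S ω then some (X2 ω) else none with hW
  set q : α × β → ℝ := pr p (fun ω => (X1 ω, X2 ω)) with hq
  -- pr p S false = 1 - α2
  have hSf : pr p S false = 1 - α2 := by
    have h := pr_total p hp1 S
    rw [Fintype.sum_bool, hS] at h
    linarith
  -- marginalized independence: S ⟂ (X1, X2)
  have hSind2 : ∀ s a b, pr p (fun ω => (S ω, X1 ω, X2 ω)) (s, a, b)
      = pr p S s * q (a, b) := by
    intro s a b
    have h1 : pr p (fun ω => (S ω, X1 ω, X2 ω)) (s, a, b)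
        = ∑ u, pr p (fun ω => ((S ω, X1 ω, X2 ω), U ω)) ((s, a, b), u) :=
      pr_fst p _ U (s, a, b)
    have h2 : ∀ u, pr p (fun ω => ((S ω, X1 ω, X2 ω), U ω)) ((s, a, b), u)
        = pr p (fun ω => (S ω, X1 ω, X2 ω, U ω)) (s, a, b, u) :=
      fun u => pr_congr p fun ω => by simp [Prod.ext_iff, and_assoc]
    have h3 : q (a, b) = ∑ u, pr p (fun ω => ((X1 ω, X2 ω), U ω)) ((a, b), u) :=
      pr_fst p _ U (a, b)
    have h4 : ∀ u, pr p (fun ω => ((X1 ω, X2 ω), U ω)) ((a, b), u)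
        = pr p (fun ω => (X1 ω, X2 ω, U ω)) (a, b, u) :=
      fun u => pr_congr p fun ω => by simp [Prod.ext_iff, and_assoc]
    rw [h1]
    calc ∑ u, pr p (fun ω => ((S ω, X1 ω, X2 ω), U ω)) ((s, a, b), u)
        = ∑ u, pr p S s * pr p (fun ω => (X1 ω, X2 ω, U ω)) (a, b, u) := by
          refine Finset.sum_congr rfl fun u _ => ?_
          rw [h2 u]; exact hSind s (a, b, u)
      _ = pr p S s * q (a, b) := by
          rw [← Finset.mul_sum, h3]
          congr 1
          exact Finset.sum_congr rfl fun u _ => (h4 u).symm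
  have hSX2 : ∀ s b, pr p (fun ω => (S ω, X2 ω)) (s, b) = pr p S s * pr p X2 b := by
    intro s b
    have h1 : pr p (fun ω => (S ω, X2 ω)) (s, b)
        = ∑ a, pr p (fun ω => (X1 ω, (S ω, X2 ω))) (a, (s, b)) :=
      pr_snd p X1 _ (s, b)
    have h2 : ∀ a, pr p (fun ω => (X1 ω, (S ω, X2 ω))) (a, (s, b))
        = pr p (fun ω => (S ω, X1 ω, X2 ω)) (s, a, b) :=
      fun a => pr_congr p fun ω => by
        simp only [Prod.ext_iff]; tauto
    have h3 : pr p X2 b = ∑ a, q (a, b) := pr_snd p X1 X2 b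
    rw [h1]
    calc ∑ a, pr p (fun ω => (X1 ω, (S ω, X2 ω))) (a, (s, b))
        = ∑ a, pr p S s * q (a, b) := by
          refine Finset.sum_congr rfl fun a _ => ?_
          rw [h2 a]; exact hSind2 s a b
      _ = pr p S s * pr p X2 b := by rw [← Finset.mul_sum, h3]
  -- distribution of W
  have hWnone : pr p W none = 1 - α2 := by
    have h : pr p W none = pr p S false :=
      pr_congr p fun ω => by by_cases h : S ω <;> simp [hW, h]
    rw [h, hSf]
  have hWsome : ∀ b, pr p W (some b) = α2 * pr p X2 b := by
    intro b
    have h : pr p W (some b) = pr p (fun ω => (S ω, X2 ω)) (true, b) :=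
      pr_congr p fun ω => by by_cases h : S ω <;> simp [hW, h, Prod.ext_iff]
    rw [h, hSX2, hS]
  -- distribution of the joint Z = ((X1,X2), W)
  set Z : Ω → (α × β) × Option β := fun ω => ((X1 ω, X2 ω), W ω) with hZ
  have hZnone : ∀ ab : α × β, pr p Z (ab, none) = (1 - α2) * q ab := by
    rintro ⟨a, b⟩
    have h : pr p Z ((a, b), none) = pr p (fun ω => (S ω, X1 ω, X2 ω)) (false, a, b) :=
      pr_congr p fun ω => by
        by_cases h : S ω <;> simp [hZ, hW, h, Prod.ext_iff] <;> tauto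
    rw [h, hSind2, hSf]
  have hZsome : ∀ (ab : α × β) (b' : β),
      pr p Z (ab, some b') = if b' = ab.2 then α2 * q ab else 0 := by
    rintro ⟨a, b⟩ b'
    by_cases hb : b' = b
    · subst hb
      have h : pr p Z ((a, b'), some b') = pr p (fun ω => (S ω, X1 ω, X2 ω)) (true, a, b') :=
        pr_congr p fun ω => by
          by_cases h : S ω <;> simp [hZ, hW, h, Prod.ext_iff] <;> tauto
      rw [h, hSind2, hS]
      simp
    · have hz : ∀ ω, Z ω ≠ ((a, b), some b') := by
        intro ω hcon
        have h1 : W ω = some b' := congrArg Prod.snd hcon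
        have h2 : X2 ω = b := congrArg (fun z => z.1.2) hcon
        by_cases h : S ω
        · have h3 : X2 ω = b' := by simpa [hW, h] using h1
          exact hb (h3.symm.trans h2)
        · simp [hW, h] at h1
      rw [pr_eq_zero p hz]
      simp [hb]
  -- entropy of W
  have hentW : ent p W = α2 * ent p X2
      - (α2 * Real.logb 2 α2 + (1 - α2) * Real.logb 2 (1 - α2)) := by
    have hsum : ∑ b, (α2 * pr p X2 b) * Real.logb 2 (α2 * pr p X2 b)
        = α2 * Real.logb 2 α2 + α2 * ∑ b, pr p X2 b * Real.logb 2 (pr p X2 b) := by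
      calc ∑ b, (α2 * pr p X2 b) * Real.logb 2 (α2 * pr p X2 b)
          = ∑ b, (pr p X2 b * (α2 * Real.logb 2 α2)
              + α2 * (pr p X2 b * Real.logb 2 (pr p X2 b))) :=
            Finset.sum_congr rfl fun b _ =>
              mul_logb_mul hα0 (pr_nonneg p hp0 X2 b)
        _ = (∑ b, pr p X2 b) * (α2 * Real.logb 2 α2)
              + α2 * ∑ b, pr p X2 b * Real.logb 2 (pr p X2 b) := by
            rw [Finset.sum_add_distrib, ← Finset.sum_mul, ← Finset.mul_sum]
        _ = α2 * Real.logb 2 α2 + α2 * ∑ b, pr p X2 b * Real.logb 2 (pr p X2 b) := by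
            rw [pr_total p hp1 X2]; ring
    have hEX2 : ∑ b, pr p X2 b * Real.logb 2 (pr p X2 b) = -ent p X2 := by
      unfold ent; ring
    unfold ent
    rw [Fintype.sum_option, hWnone]
    have h : ∑ b, pr p W (some b) * Real.logb 2 (pr p W (some b))
        = ∑ b, (α2 * pr p X2 b) * Real.logb 2 (α2 * pr p X2 b) :=
      Finset.sum_congr rfl fun b _ => by rw [hWsome b]
    rw [h, hsum, hEX2]
    ring
  -- entropy of Z
  have hqsum : ∑ ab, q ab = 1 := pr_total p hp1 _
  have hq0 : ∀ ab, 0 ≤ q ab := fun ab => pr_nonneg p hp0 _ ab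
  have hentZ : ent p Z = ent p (fun ω => (X1 ω, X2 ω))
      - (α2 * Real.logb 2 α2 + (1 - α2) * Real.logb 2 (1 - α2)) := by
    have hEXX : ent p (fun ω => (X1 ω, X2 ω)) = -∑ ab, q ab * Real.logb 2 (q ab) := rfl
    unfold ent
    rw [Fintype.sum_prod_type]
    have hinner : ∀ ab : α × β,
        (∑ w : Option β, pr p Z (ab, w) * Real.logb 2 (pr p Z (ab, w)))
          = q ab * ((1 - α2) * Real.logb 2 (1 - α2))
            + (1 - α2) * (q ab * Real.logb 2 (q ab))
            + (q ab * (α2 * Real.logb 2 α2) + α2 * (q ab * Real.logb 2 (q ab))) := by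
      intro ab
      rw [Fintype.sum_option, hZnone ab]
      have h1 : ∑ b', pr p Z (ab, some b') * Real.logb 2 (pr p Z (ab, some b'))
          = (α2 * q ab) * Real.logb 2 (α2 * q ab) := by
        have h2 : ∀ b', pr p Z (ab, some b') * Real.logb 2 (pr p Z (ab, some b'))
            = if b' = ab.2 then (α2 * q ab) * Real.logb 2 (α2 * q ab) else 0 := by
          intro b'
          rw [hZsome ab b']
          by_cases h : b' = ab.2 <;> simp [h]
        rw [Finset.sum_congr rfl fun b' _ => h2 b']
        simp
      rw [h1, mul_logb_mul (by linarith : (0:ℝ) ≤ 1 - α2) (hq0 ab),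
        mul_logb_mul hα0 (hq0 ab)]
    rw [Finset.sum_congr rfl fun ab _ => hinner ab, ← hq]
    simp only [Finset.sum_add_distrib, ← Finset.sum_mul, ← Finset.mul_sum, hqsum]
    ring
  constructor
  · show ent p Z - ent p W = _
    rw [hentZ, hentW]
    show _ = α2 * (ent p (fun ω => (X1 ω, X2 ω)) - ent p X2) + _
    ring
  · show ent p W + ent p (fun ω => (X1 ω, X2 ω))
        - ent p (fun ω => (W ω, (X1 ω, X2 ω))) = α2 * ent p X2
    have hswap : ent p (fun ω => (W ω, (X1 ω, X2 ω))) = ent p Z :=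
      ent_swap p W (fun ω => (X1 ω, X2 ω))
    rw [hswap, hentZ, hentW]
    ring
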